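/- Let P₁, …, Pₙ be smooth families of mutually orthogonal projections as above with i, j, k, l four distinct indices. Then the 3-form tr(Pᵢ dPⱼ dPₖ dPₗ) vanishes identically. -/

import Mathlib

/-- The trace of a continuous linear endomorphism. -/
noncomputable def trL {H : Type*} [NormedAddCommGroup H] [InnerProductSpace ℂ H]
    (T : H →L[ℂ] H) : ℂ :=
  LinearMap.trace ℂ H T.toLinearMap

/-- The alternation (evaluation of the 3-form built from the 3-linear expression `f`). -/
def alt3 {E : Type*} (f : E → E → E → ℂ) (u v w : E) : ℂ :=
  f u v w - f v u w - f u w v + f v w u + f w u v - f w v u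

lemma trL_mul_comm {H : Type*} [NormedAddCommGroup H] [InnerProductSpace ℂ H]
    (X Y : H →L[ℂ] H) : trL (X * Y) = trL (Y * X) := by
  unfold trL
  exact LinearMap.trace_mul_comm ℂ X.toLinearMap Y.toLinearMap

lemma leibniz_apply {E H : Type*} [NormedAddCommGroup E] [NormedSpace ℝ E]
    [NormedAddCommGroup H] [InnerProductSpace ℂ H]
    (f g : E → (H →L[ℂ] H)) (hf : Differentiable ℝ f) (hg : Differentiable ℝ g)
    (m a : E) :
    fderiv ℝ (fun x => f x * g x) m a
      = f m * fderiv ℝ g m a + fderiv ℝ f m a * g m := by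
  rw [fderiv_fun_mul' (hf m) (hg m)]
  simp [ContinuousLinearMap.smulRight_apply, smul_eq_mul]

/-- For smooth mutually orthogonal projections with `ΣPᵢ = 1` and four
pairwise distinct indices `i, j, k, l`, the 3-form `tr(Pᵢ dPⱼ dPₖ dPₗ)` vanishes. -/
theorem three_form_trace_vanishes
    {E H : Type*} [NormedAddCommGroup E] [NormedSpace ℝ E]
    [NormedAddCommGroup H] [InnerProductSpace ℂ H] [FiniteDimensional ℂ H]
    {n : ℕ} (P : Fin n → E → (H →L[ℂ] H))
    (hPdiff : ∀ i, Differentiable ℝ (P i))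
    (hsa : ∀ i m, IsSelfAdjoint (P i m))
    (horth : ∀ i j m, P i m * P j m = if i = j then P i m else 0)
    (hsum : ∀ m, ∑ i, P i m = 1)
    (i j k l : Fin n) (hij : i ≠ j) (hik : i ≠ k) (hil : i ≠ l)
    (hjk : j ≠ k) (hjl : j ≠ l) (hkl : k ≠ l) (m : E) :
    ∀ u v w : E,
      alt3 (fun a b c => trL (P i m * (fderiv ℝ (P j) m a) *
        (fderiv ℝ (P k) m b) * (fderiv ℝ (P l) m c))) u v w = 0 := by
  -- key relation: for s ≠ t, (dP s) P t + P s (dP t) = 0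
  have key : ∀ s t : Fin n, s ≠ t → ∀ a : E,
      fderiv ℝ (P s) m a * P t m + P s m * fderiv ℝ (P t) m a = 0 := by
    intro s t hst a
    have h0 : (fun x => P s x * P t x) = fun _ => (0 : H →L[ℂ] H) := by
      funext x; rw [horth s t x, if_neg hst]
    have := leibniz_apply (P s) (P t) (hPdiff s) (hPdiff t) m a
    rw [h0] at this
    simp only [fderiv_fun_const, Pi.zero_apply, ContinuousLinearMap.zero_apply] at this
    linear_combination (norm := noncomm_ring) -this
  -- consequence: for s ≠ t, P s * (dP t) * P t = P s * (dP t)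
  have absorb : ∀ s t : Fin n, s ≠ t → ∀ a : E,
      P s m * fderiv ℝ (P t) m a * P t m = P s m * fderiv ℝ (P t) m a := by
    intro s t hst a
    have h1 : P s m * fderiv ℝ (P t) m a = -(fderiv ℝ (P s) m a * P t m) := by
      linear_combination (norm := noncomm_ring) key s t hst a
    have h2 : P t m * P t m = P t m := by rw [horth t t m, if_pos rfl]
    rw [h1]
    calc -(fderiv ℝ (P s) m a * P t m) * P t m
        = -(fderiv ℝ (P s) m a * (P t m * P t m)) := by noncomm_ring
      _ = -(fderiv ℝ (P s) m a * P t m) := by rw [h2]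
  -- each individual term vanishes
  have term0 : ∀ a b c : E, trL (P i m * (fderiv ℝ (P j) m a) *
      (fderiv ℝ (P k) m b) * (fderiv ℝ (P l) m c)) = 0 := by
    intro a b c
    set A := fderiv ℝ (P j) m a with hA
    set B := fderiv ℝ (P k) m b with hB
    set C := fderiv ℝ (P l) m c with hC
    have h1 := absorb i j hij a
    have h2 := absorb j k hjk b
    have h3 := absorb k l hkl c
    rw [← hA] at h1
    rw [← hB] at h2
    rw [← hC] at h3
    have e1 : P i m * A * B * C = P i m * A * P j m * B * C := by rw [h1]
    have e2 : P i m * A * P j m * B * C = P i m * A * (P j m * B * P k m) * C := by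
      rw [h2]; noncomm_ring
    have e3 : (P i m * A * (P j m * B * (P k m * C))) * P l m
        = P i m * A * (P j m * B * P k m) * C := by
      have h' : (P i m * A * (P j m * B * (P k m * C))) * P l m
          = P i m * A * (P j m * B * (P k m * C * P l m)) := by noncomm_ring
      rw [h', h3]; noncomm_ring
    rw [e1, e2, ← e3, trL_mul_comm]
    have e4 : P l m * (P i m * A * (P j m * B * (P k m * C)))
        = (P l m * P i m) * (A * (P j m * B * (P k m * C))) := by noncomm_ring
    have hli : P l m * P i m = 0 := by rw [horth l i m, if_neg (Ne.symm hil)]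
    rw [e4, hli, zero_mul]
    simp [trL]
  intro u v w
  simp [alt3, term0]
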